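/- arXiv:math/0008163 — 2 statements merged into one kernel-verified Lean document; each statement's English description precedes it below -/
import Mathlib

section
/- Adding a cell to the right of a ribbon: let λ = (λ_1, …, λ_ℓ) be a partition with ℓ ≥ 1 and let μ := (λ_1 + 1, λ_2, …, λ_ℓ) (so that R(μ) is the ribbon of size k+1 obtained from R(λ), of size k = λ_1 + ℓ − 1, by adjoining one cell at the right end, with the same descent set D(μ) = D(λ)). Then S^{R(λ)} ∘ S̃_1 = S^{R(μ)}. (Eq. (26).) -/
open MvPolynomial

noncomputable section

/-- The base field `F = ℚ(q)`. -/
abbrev F : Type := RatFunc ℚ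

/-- The parameter `q`. -/
def q : F := RatFunc.X

/-- The ring of symmetric functions `Λ = F[p₁, p₂, …]`, realized as the polynomial
ring in the power sums; the variable `X n` represents the power sum `p_{n+1}`. -/
abbrev SymF : Type := MvPolynomial ℕ F

/-- The complete homogeneous symmetric function `h_n`, defined via Newton's identity
`(n+1) h_{n+1} = ∑_{k=1}^{n+1} p_k h_{n+1-k}`, which is equivalent to the
generating-function definition `∑ h_n t^n = exp (∑ p_k t^k / k)`. -/
def hN : ℕ → SymF
  | 0 => 1
  | (n+1) => ((n+1 : F))⁻¹ • ∑ i ∈ Finset.range (n+1), X i * hN (n - i)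
decreasing_by exact Nat.lt_succ_of_le (Nat.sub_le n i)

/-- The elementary symmetric function `e_n`, via
`(n+1) e_{n+1} = ∑_{k=1}^{n+1} (-1)^{k-1} p_k e_{n+1-k}`, equivalent to
`∑ e_n t^n = exp (∑ (-1)^{k-1} p_k t^k / k)`. -/
def eN : ℕ → SymF
  | 0 => 1
  | (n+1) => ((n+1 : F))⁻¹ • ∑ i ∈ Finset.range (n+1), ((-1:F))^i • (X i * eN (n - i))
decreasing_by exact Nat.lt_succ_of_le (Nat.sub_le n i)

/-- `h_m` for `m : ℤ`, with `h_m = 0` for `m < 0`. -/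
def hInt (m : ℤ) : SymF := if 0 ≤ m then hN m.toNat else 0

/-- `e_m` for `m : ℤ`, with `e_m = 0` for `m < 0`. -/
def eInt (m : ℤ) : SymF := if 0 ≤ m then eN m.toNat else 0

/-- The weighted degree of a monomial in the power sums (`p_{n+1}` has degree `n+1`). -/
def wt (d : ℕ →₀ ℕ) : ℕ := d.sum (fun n m => (n + 1) * m)

/-- The operator `p_{λ}^⊥` for a power-sum monomial with exponent vector `d`:
the composition of the derivations `(k ∂/∂p_k)^{d_k}`. -/
def monPerp (d : ℕ →₀ ℕ) : Module.End F SymF :=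
  ((d.support.sort (· ≤ ·)).map
    (fun n : ℕ => ((((n : ℕ) + 1 : ℕ) : F) • ((pderiv n : Derivation F SymF SymF) : SymF →ₗ[F] SymF)) ^ (d n))).prod

/-- The skewing operator `f^⊥`: writing `f` as a polynomial in the `p_k` and replacing
each `p_k` by the derivation `k·∂/∂p_k`.  This is the adjoint of multiplication by `f`
with respect to the Hall inner product. -/
def perp (f : SymF) : Module.End F SymF :=
  ∑ d ∈ f.support, f.coeff d • monPerp d

/-- The monomial `p^d` in `Λ`. -/
def mono (d : ℕ →₀ ℕ) : SymF := monomial d (1 : F)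

/-- Builds the linear operator on `Λ` with prescribed values on the monomial basis. -/
def mkOp (val : (ℕ →₀ ℕ) → SymF) : Module.End F SymF :=
  (basisMonomials ℕ F).constr F val

/-- The Bernstein operator `S_m = ∑_{j ≥ 0} (-1)^j h_{m+j} e_j^⊥` (the sum applied to a
monomial of weighted degree `w` has no nonzero terms beyond `j = w`, since `e_j^⊥`
lowers degree by `j`). -/
def bern (m : ℤ) : Module.End F SymF :=
  mkOp fun d => ∑ j ∈ Finset.range (wt d + 1),
    ((-1 : F))^j • (hInt (m + j) * perp (eInt j) (mono d))

/-- The conjugate Bernstein operator `S̃_m = ∑_{j ≥ 0} (-1)^j e_{m+j} h_j^⊥`. -/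
def bernT (m : ℤ) : Module.End F SymF :=
  mkOp fun d => ∑ j ∈ Finset.range (wt d + 1),
    ((-1 : F))^j • (eInt (m + j) * perp (hInt j) (mono d))

/-- The Jing operator `H_m^q = ∑_{i,j ≥ 0} (-1)^i q^j h_{m+i+j} e_i^⊥ h_j^⊥`. -/
def jing (m : ℤ) : Module.End F SymF :=
  mkOp fun d => ∑ i ∈ Finset.range (wt d + 1), ∑ j ∈ Finset.range (wt d + 1),
    (((-1 : F))^i * q^j) • (hInt (m + i + j) * perp (eInt i) (perp (hInt j) (mono d)))

/-- The Schur function of an integer sequence, via the Jacobi–Trudi determinant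
`s_{(p_1,…,p_k)} = det (h_{p_i - i + j})`. -/
def schurSeq {k : ℕ} (p : Fin k → ℤ) : SymF :=
  (Matrix.of (fun i j : Fin k => hInt (p i - (i : ℤ) + (j : ℤ)))).det

/-- The Schur function of a list of natural numbers. -/
def schur (L : List ℕ) : SymF := schurSeq (fun i : Fin L.length => ((L.get i : ℕ) : ℤ))

/-- A partition, as a weakly decreasing list of positive integers. -/
def IsPartition (L : List ℕ) : Prop := L.Pairwise (· ≥ ·) ∧ ∀ x ∈ L, 0 < x

/-- The conjugate partition: `λ'_i` is the number of parts of `λ` of size `≥ i`. -/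
def conj (L : List ℕ) : List ℕ :=
  (List.range L.headI).map (fun i => (L.filter (fun x => i + 1 ≤ x)).length)

/-- `λ^{rc} = (λ₂ - 1, λ₃ - 1, …, λ_ℓ - 1)` (discarding zero parts): the partition `λ`
with its first row and column removed. -/
def rc (L : List ℕ) : List ℕ := (L.tail.map (fun x => x - 1)).filter (fun x => 0 < x)

/-- The partition of `n` `P` as a weakly decreasing list. -/
def partList {n : ℕ} (P : n.Partition) : List ℕ := (P.parts.sort (· ≤ ·)).reverse

/-- The ribbon operator `S^{R(λ)} = s_{λ^{rc}}^⊥ ∘ S̃_{λ'_1} ∘ ⋯ ∘ S̃_{λ'_{λ_1}}`. -/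
def ribbonOp (L : List ℕ) : Module.End F SymF :=
  perp (schur (rc L)) * ((conj L).map (fun c => bernT (c : ℤ))).prod

/-- The size `λ₁ + ℓ(λ) - 1` of the ribbon `λ/λ^{rc}`. -/
def ribbonSize (L : List ℕ) : ℕ := L.headI + L.length - 1

/-- The descent set `D(λ) = {λ_i + ℓ(λ) - i : 2 ≤ i ≤ ℓ(λ)}` of the ribbon `λ/λ^{rc}`. -/
def descents (L : List ℕ) : Finset ℕ :=
  (Finset.Icc 2 L.length).image (fun i => L.getD (i - 1) 0 + L.length - i)

/-- `maj` of the ribbon `λ/λ^{rc}`. -/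
def maj (L : List ℕ) : ℕ := ∑ d ∈ descents L, d

/-- `comaj = k(k-1)/2 - maj` for a ribbon of size `k`. -/
def comaj (k : ℕ) (L : List ℕ) : ℕ := k * (k - 1) / 2 - maj L

/-- The column-adding operator `H_{1^k}^q = ∑_{R ⊨ k} q^{comaj(R)} S^R`, the sum over
all partitions `λ` with `λ₁ + ℓ(λ) - 1 = k` (all of which satisfy `|λ| ≤ k²`). -/
def Hcol (k : ℕ) : Module.End F SymF :=
  ∑ n ∈ Finset.range (k * k + 1), ∑ P : n.Partition,
    if ribbonSize (partList P) = k then q ^ (comaj k (partList P)) • ribbonOp (partList P)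
    else 0

/-- The hat involution: `V̂(P) = ∑_λ (-1)^{|λ|} V(s_{λ'}) · (s_λ^⊥ P)` (on a monomial of
weighted degree `w`, only partitions with `|λ| ≤ w` contribute). -/
def hat (V : Module.End F SymF) : Module.End F SymF :=
  mkOp fun d => ∑ n ∈ Finset.range (wt d + 1), ∑ P : n.Partition,
    ((-1 : F))^n • (V (schur (conj (partList P))) * perp (schur (partList P)) (mono d))

/-- The Hall–Littlewood symmetric function `H_λ[X;q] = H_{λ₁}^q ⋯ H_{λ_ℓ}^q (1)`. -/
def HL (L : List ℕ) : SymF := ((L.map (fun a => jing (a : ℤ))).prod) 1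

/-- The involution `ω` with `ω(p_k) = (-1)^{k-1} p_k`. -/
def omegaOp : Module.End F SymF :=
  (aeval (fun n : ℕ => ((-1 : F))^n • (X n : SymF))).toLinearMap

end

/-- Eq. (26): for a partition `λ = (λ₁, …, λ_ℓ)` with `ℓ ≥ 1` and `μ = (λ₁+1, λ₂, …, λ_ℓ)`,
`S^{R(λ)} ∘ S̃₁ = S^{R(μ)}` (the ribbon with one cell adjoined at the right end). -/
theorem ribbon_add_right (L : List ℕ) (hL : IsPartition L) (hne : L ≠ []) :
    ribbonOp L * bernT 1 = ribbonOp ((L.headI + 1) :: L.tail) := by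
  obtain ⟨h, t, rfl⟩ : ∃ h t, L = h :: t := by
    cases L with
    | nil => exact absurd rfl hne
    | cons a b => exact ⟨a, b, rfl⟩
  obtain ⟨hsort, hpos⟩ := hL
  have ht : ∀ x ∈ t, x ≤ h := fun x hx => (List.pairwise_cons.mp hsort).1 x hx
  have hconj : conj ((h+1) :: t) = conj (h :: t) ++ [1] := by
    unfold conj
    simp only [List.headI]
    rw [List.range_succ, List.map_append]
    congr 1
    · apply List.map_congr_left
      intro i hi
      have hi' : i + 1 ≤ h := List.mem_range.mp hi
      have hi'' : i + 1 ≤ h + 1 := Nat.le_succ_of_le hi'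
      simp [List.filter_cons, hi', hi'', Nat.le_of_succ_le hi', Nat.lt_of_succ_le hi']
    · have hfil : t.filter (fun x => decide (h + 1 ≤ x)) = [] := by
        rw [List.filter_eq_nil_iff]
        intro x hx
        have := ht x hx
        simp only [decide_eq_true_eq]
        omega
      simpa [List.filter_cons, hfil] using ht
  have key : ribbonOp ((h+1) :: t) =
      perp (schur (rc (h :: t))) *
        (((conj (h :: t)).map (fun c => bernT (c : ℤ))).prod * bernT 1) := by
    unfold ribbonOp
    rw [hconj]
    have hrc : rc ((h+1) :: t) = rc (h :: t) := rfl
    rw [hrc]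
    simp [mul_assoc]
  show ribbonOp (h :: t) * bernT 1 = ribbonOp ((h + 1) :: t)
  rw [key]
  unfold ribbonOp
  rw [mul_assoc]
end

section
/- k-level equality is preserved by conjugated hats: let U and V be F-linear operators on Λ and k ≥ 0 an integer such that U(s_λ) = V(s_λ) for every partition λ with ℓ(λ) ≤ k. Then (ω ∘ Û ∘ ω)(s_γ) = (ω ∘ V̂ ∘ ω)(s_γ) for every partition γ with ℓ(γ) ≤ k. (Lemma 8.) -/
open MvPolynomial

set_option maxHeartbeats 1000000
set_option synthInstance.maxHeartbeats 200000

noncomputable section Aux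

instance : CharZero F := charZero_of_injective_algebraMap (algebraMap ℚ F).injective

/-- `z_d`, the squared norm of the power-sum monomial `p^d`. -/
def zF (d : ℕ →₀ ℕ) : F := d.prod fun n m => ((n + 1 : ℕ) : F) ^ m * (Nat.factorial m : F)

lemma zF_ne_zero (d : ℕ →₀ ℕ) : zF d ≠ 0 := by
  unfold zF Finsupp.prod
  refine Finset.prod_ne_zero_iff.2 fun n _ => mul_ne_zero (pow_ne_zero _ ?_) ?_
  · exact Nat.cast_ne_zero.2 (Nat.succ_ne_zero n)
  · exact Nat.cast_ne_zero.2 (Nat.factorial_pos _).ne'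

lemma zF_add_single (d : ℕ →₀ ℕ) (n : ℕ) :
    zF (d + Finsupp.single n 1) = ((n + 1 : ℕ) : F) * ((d n + 1 : ℕ) : F) * zF d := by
  classical
  set f : ℕ → ℕ → F := fun n m => ((n + 1 : ℕ) : F) ^ m * (Nat.factorial m : F) with hf
  have hf0 : ∀ m, f m 0 = 1 := by intro m; simp [hf]
  set d' : ℕ →₀ ℕ := d + Finsupp.single n 1 with hd'
  set s : Finset ℕ := insert n d.support with hs
  have hns : n ∈ s := Finset.mem_insert_self _ _
  have h1 : zF d = ∏ i ∈ s, f i (d i) :=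
    Finsupp.prod_of_support_subset d (Finset.subset_insert _ _) f (fun i _ => hf0 i)
  have hsub : d'.support ⊆ s := by
    rw [hd']
    refine (Finsupp.support_add).trans ?_
    intro i hi
    rcases Finset.mem_union.1 hi with h | h
    · exact Finset.mem_insert_of_mem h
    · rw [Finsupp.support_single_ne_zero _ one_ne_zero] at h
      simp only [Finset.mem_singleton] at h; subst h; exact hns
  have h2 : zF d' = ∏ i ∈ s, f i (d' i) :=
    Finsupp.prod_of_support_subset _ hsub f (fun i _ => hf0 i)
  rw [h1, h2, ← Finset.mul_prod_erase s _ hns, ← Finset.mul_prod_erase s (fun i => f i (d i)) hns]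
  have h3 : ∏ i ∈ s.erase n, f i (d' i) = ∏ i ∈ s.erase n, f i (d i) := by
    refine Finset.prod_congr rfl fun i hi => ?_
    have hin : i ≠ n := (Finset.mem_erase.1 hi).1
    rw [hd', Finsupp.add_apply, Finsupp.single_apply, if_neg (Ne.symm hin), Nat.add_zero]
  rw [h3]
  have h4 : d' n = d n + 1 := by
    rw [hd', Finsupp.add_apply, Finsupp.single_eq_same]
  rw [h4, hf]
  simp only [pow_succ, Nat.factorial_succ]
  push_cast
  ring

/-- The Hall inner product as a bilinear map. -/
def Bl : SymF →ₗ[F] SymF →ₗ[F] F :=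
  (basisMonomials ℕ F).constr F fun d => zF d • lcoeff F d

lemma Bl_mono (d : ℕ →₀ ℕ) (y : SymF) : Bl (mono d) y = zF d * coeff d y := by
  have h : (basisMonomials ℕ F) d = mono d := by rw [coe_basisMonomials]; rfl
  rw [Bl, ← h, Module.Basis.constr_basis]
  rfl

lemma mono_def (d : ℕ →₀ ℕ) : mono d = monomial d 1 := rfl

lemma ext_Bl {x y : SymF} (H : ∀ d, Bl (mono d) x = Bl (mono d) y) : x = y := by
  apply MvPolynomial.ext; intro d
  have h := H d
  rw [Bl_mono, Bl_mono] at h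
  exact mul_left_cancel₀ (zF_ne_zero d) h

/-- The operator `p_{n+1}^⊥ = (n+1) ∂/∂p_{n+1}`. -/
def Dop (n : ℕ) : Module.End F SymF :=
  ((((n : ℕ) + 1 : ℕ) : F) • ((pderiv n : Derivation F SymF SymF) : SymF →ₗ[F] SymF))

lemma Bl_monomial (s : ℕ →₀ ℕ) (c₀ : F) (y : SymF) :
    Bl (monomial s c₀) y = c₀ * (zF s * coeff s y) := by
  have h : monomial s c₀ = c₀ • mono s := by rw [mono_def, smul_monomial, smul_eq_mul, mul_one]
  rw [h, map_smul, LinearMap.smul_apply, smul_eq_mul, Bl_mono]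

lemma Bl_X_mul (n : ℕ) (x y : SymF) : Bl (X n * x) y = Bl x (Dop n y) := by
  classical
  induction x using MvPolynomial.induction_on' with
  | add p q hp hq => rw [mul_add, map_add, LinearMap.add_apply, hp, hq, map_add, LinearMap.add_apply]
  | monomial a c =>
    induction y using MvPolynomial.induction_on' with
    | add p q hp hq => rw [map_add, LinearMap.map_add, hp, hq, map_add]
    | monomial b c' =>
      have hXm : (X n : SymF) * monomial a c = monomial (Finsupp.single n 1 + a) c := by
        rw [show (X n : SymF) = monomial (Finsupp.single n 1) 1 from rfl, monomial_mul, one_mul]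
      have hD : Dop n (monomial b c') =
          (((n : ℕ) + 1 : ℕ) : F) • monomial (b - Finsupp.single n 1) (c' * (b n : F)) := by
        rw [Dop, LinearMap.smul_apply]
        congr 1
        rw [Derivation.coeFn_coe]
        exact pderiv_monomial
      rw [hXm, Bl_monomial, Bl_monomial, hD, coeff_smul, coeff_monomial, coeff_monomial,
        smul_eq_mul]
      by_cases hb : b = Finsupp.single n 1 + a
      · rw [if_pos hb, hb, add_tsub_cancel_left, if_pos rfl]
        have hbn : ((a + Finsupp.single n 1 : ℕ →₀ ℕ)) n = a n + 1 := by
          rw [Finsupp.add_apply, Finsupp.single_eq_same]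
        rw [add_comm (Finsupp.single n 1) a, zF_add_single, hbn]
        push_cast
        ring
      · rw [if_neg hb]
        by_cases h2 : b - Finsupp.single n 1 = a
        · rw [if_pos h2]
          by_cases h3 : b n = 0
          · rw [h3]; push_cast; ring
          · exfalso
            apply hb
            have hle : Finsupp.single n 1 ≤ b := Finsupp.single_le_iff.mpr (by omega)
            have h4 := tsub_add_cancel_of_le hle
            rw [h2] at h4
            rw [← h4, add_comm]
        · rw [if_neg h2]; ring

lemma Bl_Xpow_mul (n m : ℕ) (x y : SymF) : Bl (X n ^ m * x) y = Bl x ((Dop n ^ m) y) := by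
  induction m generalizing y with
  | zero => simp
  | succ m ih =>
    have h1 : (X n : SymF) ^ (m + 1) * x = X n * (X n ^ m * x) := by ring
    rw [h1, Bl_X_mul, ih, pow_succ, Module.End.mul_apply]

lemma Bl_listprod_mul (l : List ℕ) (d : ℕ →₀ ℕ) (x y : SymF) :
    Bl ((l.map fun n => (X n : SymF) ^ d n).prod * x) y
      = Bl x ((l.map fun n => Dop n ^ d n).prod y) := by
  induction l generalizing x with
  | nil => simp
  | cons hd t ih =>
    simp only [List.map_cons, List.prod_cons]
    have h1 : ((X hd : SymF) ^ d hd * (t.map fun n => (X n : SymF) ^ d n).prod) * x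
        = (t.map fun n => (X n : SymF) ^ d n).prod * (X hd ^ d hd * x) := by ring
    rw [h1, ih, Bl_Xpow_mul, Module.End.mul_apply]

lemma monPerp_eq (d : ℕ →₀ ℕ) :
    monPerp d = ((d.support.sort (· ≤ ·)).map fun n => Dop n ^ d n).prod := rfl

lemma Bl_mono_mul (d : ℕ →₀ ℕ) (x y : SymF) : Bl (mono d * x) y = Bl x (monPerp d y) := by
  have h1 : mono d = ((d.support.sort (· ≤ ·)).map fun n => (X n : SymF) ^ d n).prod := by
    rw [mono_def, monic_monomial_eq]
    unfold Finsupp.prod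
    rw [← Finset.prod_map_toList]
    exact (List.Perm.prod_eq (List.Perm.map _ (Finset.sort_perm_toList _ _))).symm
  rw [h1, Bl_listprod_mul, monPerp_eq]

lemma Bl_adj (f x y : SymF) : Bl (f * x) y = Bl x (perp f y) := by
  classical
  conv_lhs => rw [f.as_sum]
  rw [Finset.sum_mul, map_sum, LinearMap.sum_apply, perp, LinearMap.sum_apply, map_sum]
  refine Finset.sum_congr rfl fun d _ => ?_
  have h1 : monomial d (coeff d f) * x = (coeff d f) • (mono d * x) := by
    rw [mono_def, ← smul_mul_assoc, smul_monomial, smul_eq_mul, mul_one]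
  rw [h1]
  simp only [map_smul, LinearMap.smul_apply, smul_eq_mul]
  rw [Bl_mono_mul]

lemma Bl_mono_perp (d : ℕ →₀ ℕ) (f y : SymF) :
    Bl (mono d) (perp f y) = Bl (f * mono d) y := (Bl_adj f (mono d) y).symm

lemma perp_mul_apply (f g y : SymF) : perp (f * g) y = perp g (perp f y) := by
  apply ext_Bl; intro d
  rw [Bl_mono_perp, Bl_mono_perp, mul_assoc, Bl_adj, Bl_adj]

lemma perp_C_apply (c : F) (y : SymF) : perp (C c) y = c • y := by
  apply ext_Bl; intro d
  rw [Bl_mono_perp, C_mul']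
  simp only [map_smul, LinearMap.smul_apply, smul_eq_mul]

lemma perp_one_apply (y : SymF) : perp 1 y = y := by
  rw [← C_1, perp_C_apply, one_smul]

lemma perp_smul_apply (c : F) (f y : SymF) : perp (c • f) y = c • perp f y := by
  apply ext_Bl; intro d
  rw [Bl_mono_perp, smul_mul_assoc]
  simp only [map_smul, LinearMap.smul_apply, smul_eq_mul]
  rw [Bl_mono_perp]

lemma perp_sum_apply {ι : Type*} (s : Finset ι) (f : ι → SymF) (y : SymF) :
    perp (∑ i ∈ s, f i) y = ∑ i ∈ s, perp (f i) y := by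
  apply ext_Bl; intro d
  rw [Bl_mono_perp, Finset.sum_mul, map_sum, LinearMap.sum_apply, map_sum]
  exact Finset.sum_congr rfl fun i _ => (Bl_mono_perp d (f i) y).symm


/-- `ω` as an algebra homomorphism. -/
def og : SymF →ₐ[F] SymF := aeval fun n : ℕ => ((-1 : F))^n • (X n : SymF)

lemma omegaOp_apply (x : SymF) : omegaOp x = og x := rfl

lemma og_X (n : ℕ) : og (X n) = ((-1 : F))^n • X n := aeval_X _ n

lemma og_og (x : SymF) : og (og x) = x := by
  have h : og.comp og = AlgHom.id F SymF := by
    apply MvPolynomial.algHom_ext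
    intro n
    rw [AlgHom.comp_apply, og_X, map_smul, og_X, smul_smul, AlgHom.id_apply, ← mul_pow]
    norm_num
  calc og (og x) = (og.comp og) x := rfl
    _ = x := by rw [h]; rfl

def sgnF (d : ℕ →₀ ℕ) : F := ∏ n ∈ d.support, ((-1 : F))^(n * d n)

lemma sgnF_mul_self (d : ℕ →₀ ℕ) : sgnF d * sgnF d = 1 := by
  rw [sgnF, ← Finset.prod_mul_distrib]
  refine Finset.prod_eq_one fun n _ => ?_
  rw [← mul_pow]
  norm_num

lemma og_mono (d : ℕ →₀ ℕ) : og (mono d) = sgnF d • mono d := by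
  rw [mono_def, og, aeval_monomial, map_one, one_mul]
  unfold Finsupp.prod
  have h1 : ∀ n, (((-1:F))^n • (X n : SymF))^(d n) = C (((-1:F))^(n * d n)) * (X n)^(d n) := by
    intro n
    rw [smul_pow, ← pow_mul, ← C_mul']
  rw [Finset.prod_congr rfl fun n _ => h1 n, Finset.prod_mul_distrib, ← map_prod, ← sgnF, C_mul']
  congr 1
  rw [monic_monomial_eq]
  rfl

lemma Bl_og (x y : SymF) : Bl (og x) (og y) = Bl x y := by
  induction x using MvPolynomial.induction_on' with
  | add p q hp hq => simp only [map_add, LinearMap.add_apply, hp, hq]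
  | monomial a c =>
    induction y using MvPolynomial.induction_on' with
    | add p q hp hq => simp only [map_add, LinearMap.add_apply, hp, hq]
    | monomial b c' =>
      have key : ∀ (s : ℕ →₀ ℕ) (c₀ : F), og (monomial s c₀) = (c₀ * sgnF s) • mono s := by
        intro s c₀
        have h : monomial s c₀ = c₀ • mono s := by
          rw [mono_def, smul_monomial, smul_eq_mul, mul_one]
        rw [h, map_smul, og_mono, smul_smul]
      rw [key, key, Bl_monomial]
      simp only [map_smul, LinearMap.smul_apply, smul_eq_mul, Bl_mono]
      rw [mono_def, coeff_monomial, coeff_monomial]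
      by_cases hab : b = a
      · subst hab
        rw [if_pos rfl, if_pos rfl]
        linear_combination (c * c' * zF b) * (sgnF_mul_self b)
      · rw [if_neg hab, if_neg hab]
        ring

lemma Bl_og_right (x y : SymF) : Bl x (og y) = Bl (og x) y := by
  conv_lhs => rw [← og_og x]
  rw [Bl_og]

lemma og_hN (n : ℕ) : og (hN n) = eN n := by
  induction n using Nat.strong_induction_on with
  | _ n ih =>
    match n with
    | 0 => simp only [hN, eN, map_one]
    | Nat.succ m =>
      simp only [hN, eN]
      rw [map_smul, map_sum]
      congr 1
      refine Finset.sum_congr rfl fun i hi => ?_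
      rw [map_mul, og_X, ih (m - i) (by omega), smul_mul_assoc]

lemma og_hInt (m : ℤ) : og (hInt m) = eInt m := by
  unfold hInt eInt
  split
  · exact og_hN _
  · exact map_zero og


lemma perp_X_apply (n : ℕ) (y : SymF) : perp (X n) y = Dop n y := by
  apply ext_Bl; intro d
  rw [Bl_mono_perp, Bl_X_mul]

lemma Dop_mul (n : ℕ) (x y : SymF) : Dop n (x * y) = Dop n x * y + x * Dop n y := by
  rw [Dop]
  simp only [LinearMap.smul_apply, Derivation.coeFn_coe]
  rw [pderiv_mul, smul_add, smul_mul_assoc, mul_smul_comm]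

lemma Dop_one (j : ℕ) : Dop j (1 : SymF) = 0 := by
  rw [Dop, LinearMap.smul_apply, Derivation.coeFn_coe]
  rw [Derivation.map_one_eq_zero, smul_zero]

lemma Dop_X_self (n : ℕ) : Dop n (X n) = C ((n + 1 : ℕ) : F) := by
  rw [Dop, LinearMap.smul_apply, Derivation.coeFn_coe, pderiv_X_self, smul_eq_C_mul, mul_one]

lemma Dop_X_ne {i j : ℕ} (h : i ≠ j) : Dop j (X i) = 0 := by
  rw [Dop, LinearMap.smul_apply, Derivation.coeFn_coe, pderiv_X_of_ne h, smul_zero]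

lemma Dop_hN (j n : ℕ) : Dop j (hN n) = hInt ((n : ℤ) - ((j : ℤ) + 1)) := by
  induction n using Nat.strong_induction_on with
  | _ n ih =>
  match n with
  | 0 =>
    simp only [hN]
    rw [Dop_one, hInt, if_neg (by omega)]
  | (m+1) =>
    simp only [hN]
    rw [map_smul, map_sum]
    have hterm : ∀ i ∈ Finset.range (m+1), Dop j (X i * hN (m - i)) =
        (if i = j then C ((j+1 : ℕ) : F) * hN (m - i) else 0)
          + X i * hInt ((m : ℤ) - (i : ℤ) - ((j : ℤ) + 1)) := by
      intro i hi
      have hi' : i ≤ m := Nat.lt_succ_iff.mp (Finset.mem_range.mp hi)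
      rw [Dop_mul, ih (m - i) (by omega)]
      have hc : ((m - i : ℕ) : ℤ) - ((j : ℤ) + 1) = (m : ℤ) - (i : ℤ) - ((j : ℤ) + 1) := by
        omega
      rw [hc]
      congr 1
      by_cases hij : i = j
      · subst hij; rw [Dop_X_self, if_pos rfl]
      · rw [Dop_X_ne hij, if_neg hij, zero_mul]
    rw [Finset.sum_congr rfl hterm, Finset.sum_add_distrib, Finset.sum_ite_eq']
    by_cases hj : j ≤ m
    · rw [if_pos (Finset.mem_range.mpr (by omega))]
      have hshrink : ∑ i ∈ Finset.range (m+1), X i * hInt ((m:ℤ) - (i:ℤ) - ((j:ℤ)+1))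
          = ∑ i ∈ Finset.range (m - j), X i * hN (m - j - 1 - i) := by
        rw [← Finset.sum_subset (Finset.range_subset_range.mpr (by omega : m - j ≤ m + 1))]
        · refine Finset.sum_congr rfl fun i hi => ?_
          have hi' : i < m - j := Finset.mem_range.mp hi
          have hpos : (0:ℤ) ≤ (m:ℤ) - (i:ℤ) - ((j:ℤ)+1) := by omega
          rw [hInt, if_pos hpos]
          have harg : ((m:ℤ) - (i:ℤ) - ((j:ℤ)+1)).toNat = m - j - 1 - i := by omega
          rw [harg]
        · intro i hi hni
          rw [Finset.mem_range] at hi hni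
          have hneg : ¬ (0:ℤ) ≤ (m:ℤ) - (i:ℤ) - ((j:ℤ)+1) := by omega
          rw [hInt, if_neg hneg, mul_zero]
      rw [hshrink]
      have hS : ∑ i ∈ Finset.range (m - j), X i * hN (m - j - 1 - i)
          = ((m - j : ℕ) : F) • hN (m - j) := by
        cases hmj : (m - j) with
        | zero => simp
        | succ t =>
          have hrec : hN (t+1) = ((t+1 : F))⁻¹ • ∑ i ∈ Finset.range (t+1), X i * hN (t - i) := by
            simp only [hN]
          rw [hrec, smul_smul]
          have hne : ((t:F)+1) ≠ 0 := Nat.cast_add_one_ne_zero t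
          have h1 : ((t+1 : ℕ) : F) * ((t:F)+1)⁻¹ = 1 := by
            push_cast
            exact mul_inv_cancel₀ hne
          rw [h1, one_smul]
          refine Finset.sum_congr rfl fun i hi => ?_
          have harg2 : t + 1 - 1 - i = t - i := by omega
          rw [harg2]
      rw [hS]
      have hpos2 : (0:ℤ) ≤ ((m+1 : ℕ):ℤ) - ((j:ℤ)+1) := by omega
      rw [C_mul', hInt, if_pos hpos2]
      have ht : (((m+1 : ℕ):ℤ) - ((j:ℤ)+1)).toNat = m - j := by omega
      rw [ht, ← add_smul, smul_smul]
      have h2 : ((m:F)+1)⁻¹ * (((j+1:ℕ):F) + ((m-j:ℕ):F)) = 1 := by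
        have h3 : (((j+1:ℕ):F) + ((m-j:ℕ):F)) = ((m:F)+1) := by
          rw [Nat.cast_sub hj]
          push_cast
          ring
        rw [h3]
        exact inv_mul_cancel₀ (Nat.cast_add_one_ne_zero m)
      rw [h2, one_smul]
    · rw [if_neg (by rw [Finset.mem_range]; omega)]
      have hz : ∀ i ∈ Finset.range (m+1), X i * hInt ((m:ℤ) - (i:ℤ) - ((j:ℤ)+1)) = 0 := by
        intro i hi
        rw [hInt, if_neg (by have := Finset.mem_range.mp hi; omega), mul_zero]
      rw [Finset.sum_congr rfl hz, Finset.sum_const_zero, zero_add, smul_zero, hInt,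
        if_neg (by omega)]


lemma hInt_congr {a b : ℤ} (h : a = b) : hInt a = hInt b := by rw [h]

lemma perp_X_hInt (j : ℕ) (c : ℤ) : perp (X j) (hInt c) = hInt (c - ((j:ℤ)+1)) := by
  rw [perp_X_apply, hInt]
  split
  · rw [Dop_hN]
    apply hInt_congr
    omega
  · rename_i hc
    rw [map_zero, hInt, if_neg (by omega)]

lemma eN_zero : eN 0 = 1 := by simp only [eN]

lemma eN_one : eN 1 = X 0 := by
  have h : eN 1 = ((0+1 : F))⁻¹ • ∑ i ∈ Finset.range 1, ((-1:F))^i • (X i * eN (0 - i)) := by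
    simp only [eN]
    norm_num
  rw [h, Finset.sum_range_one]
  norm_num [eN_zero]

lemma eN_succ (n : ℕ) : ((n+1 : ℕ) : F) • eN (n+1)
    = ∑ i ∈ Finset.range (n+1), ((-1:F))^i • (X i * eN (n - i)) := by
  have h : eN (n+1) = ((n+1 : F))⁻¹ • ∑ i ∈ Finset.range (n+1), ((-1:F))^i • (X i * eN (n - i)) := by
    simp only [eN]
  rw [h, smul_smul]
  have h2 : ((n+1:ℕ):F) * ((n:F)+1)⁻¹ = 1 := by
    push_cast
    exact mul_inv_cancel₀ (Nat.cast_add_one_ne_zero n)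
  rw [h2, one_smul]

lemma perp_eN_hInt (a : ℕ) : ∀ c : ℤ,
    perp (eN a) (hInt c) = if a = 0 then hInt c else if a = 1 then hInt (c - 1) else 0 := by
  induction a using Nat.strong_induction_on with
  | _ a ih =>
  match a with
  | 0 => intro c; rw [eN_zero, perp_one_apply, if_pos rfl]
  | 1 =>
    intro c
    rw [eN_one, perp_X_hInt, if_neg one_ne_zero, if_pos rfl]
    norm_num
  | (s+2) =>
    intro c
    have hne : ((s+1+1:ℕ):F) ≠ 0 := Nat.cast_ne_zero.2 (Nat.succ_ne_zero _)
    have hsc : ((s+1+1:ℕ):F) • perp (eN (s+1+1)) (hInt c)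
        = ∑ i ∈ Finset.range (s+1+1), ((-1:F))^i • perp (eN (s+1-i)) (hInt (c - ((i:ℤ)+1))) := by
      rw [← perp_smul_apply, eN_succ (s+1), perp_sum_apply]
      refine Finset.sum_congr rfl fun i hi => ?_
      rw [perp_smul_apply, perp_mul_apply, perp_X_hInt]
    have hval : ∀ i ∈ Finset.range (s+1+1),
        ((-1:F))^i • perp (eN (s+1-i)) (hInt (c - ((i:ℤ)+1)))
        = (if i = s then ((-1:F))^s • hInt (c - (s:ℤ) - 2) else 0)
          + (if i = s+1 then ((-1:F))^(s+1) • hInt (c - (s:ℤ) - 2) else 0) := by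
      intro i hi
      rw [Finset.mem_range] at hi
      rcases Nat.lt_trichotomy i s with hlt | heq | hgt
      · rw [ih (s+1-i) (by omega) _, if_neg (by omega), if_neg (by omega), smul_zero,
          if_neg (by omega), if_neg (by omega), add_zero]
      · have h1 : s + 1 - i = 1 := by omega
        rw [h1, ih 1 (by omega) _, if_neg one_ne_zero, if_pos rfl, if_pos heq,
          if_neg (by omega), add_zero, heq,
          hInt_congr (show c - ((s:ℤ)+1) - 1 = c - (s:ℤ) - 2 by ring)]
      · have h2 : i = s+1 := by omega
        have h1 : s + 1 - i = 0 := by omega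
        rw [h1, ih 0 (by omega) _, if_pos rfl, if_neg (by omega), if_pos h2, zero_add, h2,
          hInt_congr (show c - ((((s+1:ℕ)):ℤ) + 1) = c - (s:ℤ) - 2 by push_cast; ring)]
    rw [Finset.sum_congr rfl hval, Finset.sum_add_distrib, Finset.sum_ite_eq', Finset.sum_ite_eq',
      if_pos (Finset.mem_range.mpr (by omega)), if_pos (Finset.mem_range.mpr (by omega))] at hsc
    have hzero : ((-1:F))^s • hInt (c - (s:ℤ) - 2) + ((-1:F))^(s+1) • hInt (c - (s:ℤ) - 2) = 0 := by
      rw [pow_succ, mul_neg_one, neg_smul, add_neg_cancel]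
    rw [hzero] at hsc
    have hres := (smul_eq_zero.mp hsc).resolve_left hne
    rw [hres, if_neg (by omega), if_neg (by omega)]

lemma perp_eN_mul (n : ℕ) : ∀ x y : SymF, perp (eN n) (x * y)
    = ∑ j ∈ Finset.range (n+1), perp (eN j) x * perp (eN (n - j)) y := by
  induction n using Nat.strong_induction_on with
  | _ n ih =>
  match n with
  | 0 =>
    intro x y
    rw [Finset.sum_range_one]
    norm_num [eN_zero, perp_one_apply]
  | (m+1) =>
    intro x y
    have hne : ((m+1:ℕ):F) ≠ 0 := Nat.cast_ne_zero.2 (Nat.succ_ne_zero m)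
    have key : ∀ (a : ℕ) (z : SymF), ((a:ℕ):F) • perp (eN a) z
        = ∑ i ∈ Finset.range a, ((-1:F))^i • perp (eN (a-1-i)) (Dop i z) := by
      intro a z
      cases a with
      | zero => simp
      | succ t =>
        rw [← perp_smul_apply, eN_succ t, perp_sum_apply]
        refine Finset.sum_congr rfl fun i hi => ?_
        rw [perp_smul_apply, perp_mul_apply, perp_X_apply]
        have h' : t + 1 - 1 - i = t - i := by omega
        rw [h']
    have hL : ((m+1:ℕ):F) • perp (eN (m+1)) (x*y)
        = (∑ i ∈ Finset.range (m+1), ∑ j ∈ Finset.range (m-i+1),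
            ((-1:F))^i • (perp (eN j) (Dop i x) * perp (eN (m-i-j)) y))
          + (∑ i ∈ Finset.range (m+1), ∑ j ∈ Finset.range (m-i+1),
            ((-1:F))^i • (perp (eN j) x * perp (eN (m-i-j)) (Dop i y))) := by
      rw [← perp_smul_apply, eN_succ m, perp_sum_apply, ← Finset.sum_add_distrib]
      refine Finset.sum_congr rfl fun i hi => ?_
      rw [Finset.mem_range] at hi
      rw [perp_smul_apply, perp_mul_apply, perp_X_apply, Dop_mul, map_add,
        ih (m-i) (by omega) (Dop i x) y, ih (m-i) (by omega) x (Dop i y), smul_add]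
      congr 1
      · rw [Finset.smul_sum]
      · rw [Finset.smul_sum]
    have hR : ((m+1:ℕ):F) • ∑ a ∈ Finset.range (m+1+1), perp (eN a) x * perp (eN (m+1-a)) y
        = (∑ a ∈ Finset.range (m+1+1), ∑ i ∈ Finset.range a,
            ((-1:F))^i • (perp (eN (a-1-i)) (Dop i x) * perp (eN (m+1-a)) y))
          + (∑ a ∈ Finset.range (m+1+1), ∑ i ∈ Finset.range (m+1-a),
            ((-1:F))^i • (perp (eN a) x * perp (eN (m+1-a-1-i)) (Dop i y))) := by
      rw [Finset.smul_sum, ← Finset.sum_add_distrib]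
      refine Finset.sum_congr rfl fun a ha => ?_
      rw [Finset.mem_range] at ha
      have hsplit : ((m+1:ℕ):F) = ((a:ℕ):F) + ((m+1-a:ℕ):F) := by
        rw [← Nat.cast_add]
        congr 1
        omega
      rw [hsplit, add_smul]
      congr 1
      · rw [← smul_mul_assoc, key a x, Finset.sum_mul]
        refine Finset.sum_congr rfl fun i hi => ?_
        rw [smul_mul_assoc]
      · rw [← mul_smul_comm, key (m+1-a) y, Finset.mul_sum]
        refine Finset.sum_congr rfl fun i hi => ?_
        rw [mul_smul_comm]
    have hbij1 : (∑ a ∈ Finset.range (m+1+1), ∑ i ∈ Finset.range a,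
            ((-1:F))^i • (perp (eN (a-1-i)) (Dop i x) * perp (eN (m+1-a)) y))
        = ∑ i ∈ Finset.range (m+1), ∑ j ∈ Finset.range (m-i+1),
            ((-1:F))^i • (perp (eN j) (Dop i x) * perp (eN (m-i-j)) y) := by
      rw [Finset.sum_sigma', Finset.sum_sigma']
      refine Finset.sum_nbij'
        (i := fun p : Σ _ : ℕ, ℕ => (⟨p.2, p.1 - 1 - p.2⟩ : Σ _ : ℕ, ℕ))
        (j := fun p : Σ _ : ℕ, ℕ => (⟨p.1 + p.2 + 1, p.1⟩ : Σ _ : ℕ, ℕ))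
        ?_ ?_ ?_ ?_ ?_
      · rintro ⟨a, i⟩ hp
        simp only [Finset.mem_sigma, Finset.mem_range] at hp ⊢
        omega
      · rintro ⟨i, j⟩ hp
        simp only [Finset.mem_sigma, Finset.mem_range] at hp ⊢
        omega
      · rintro ⟨a, i⟩ hp
        simp only [Finset.mem_sigma, Finset.mem_range] at hp
        show (⟨i + (a - 1 - i) + 1, i⟩ : Σ _ : ℕ, ℕ) = ⟨a, i⟩
        have h1 : i + (a - 1 - i) + 1 = a := by omega
        rw [h1]
      · rintro ⟨i, j⟩ hp
        simp only [Finset.mem_sigma, Finset.mem_range] at hp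
        show (⟨i, i + j + 1 - 1 - i⟩ : Σ _ : ℕ, ℕ) = ⟨i, j⟩
        have h1 : i + j + 1 - 1 - i = j := by omega
        rw [h1]
      · rintro ⟨a, i⟩ hp
        simp only [Finset.mem_sigma, Finset.mem_range] at hp
        have h1 : m + 1 - a = m - i - (a - 1 - i) := by omega
        rw [h1]
    have hbij2 : (∑ a ∈ Finset.range (m+1+1), ∑ i ∈ Finset.range (m+1-a),
            ((-1:F))^i • (perp (eN a) x * perp (eN (m+1-a-1-i)) (Dop i y)))
        = ∑ i ∈ Finset.range (m+1), ∑ j ∈ Finset.range (m-i+1),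
            ((-1:F))^i • (perp (eN j) x * perp (eN (m-i-j)) (Dop i y)) := by
      rw [Finset.sum_sigma', Finset.sum_sigma']
      refine Finset.sum_nbij'
        (i := fun p : Σ _ : ℕ, ℕ => (⟨p.2, p.1⟩ : Σ _ : ℕ, ℕ))
        (j := fun p : Σ _ : ℕ, ℕ => (⟨p.2, p.1⟩ : Σ _ : ℕ, ℕ))
        ?_ ?_ ?_ ?_ ?_
      · rintro ⟨a, i⟩ hp
        simp only [Finset.mem_sigma, Finset.mem_range] at hp ⊢
        omega
      · rintro ⟨i, j⟩ hp
        simp only [Finset.mem_sigma, Finset.mem_range] at hp ⊢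
        omega
      · rintro ⟨a, i⟩ hp
        rfl
      · rintro ⟨i, j⟩ hp
        rfl
      · rintro ⟨a, i⟩ hp
        simp only [Finset.mem_sigma, Finset.mem_range] at hp
        have h1 : m + 1 - a - 1 - i = m - i - a := by omega
        rw [h1]
    have main : ((m+1:ℕ):F) • perp (eN (m+1)) (x*y)
        = ((m+1:ℕ):F) • ∑ a ∈ Finset.range (m+1+1), perp (eN a) x * perp (eN (m+1-a)) y := by
      rw [hL, hR, hbij1, hbij2]
    exact smul_right_injective SymF hne main

lemma perp_eN_one {n : ℕ} (hn : 1 ≤ n) : perp (eN n) (1 : SymF) = 0 := by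
  have h : (1 : SymF) = hInt 0 := by
    rw [hInt, if_pos le_rfl, Int.toNat_zero]
    simp only [hN]
  rw [h, perp_eN_hInt]
  rcases Nat.lt_or_ge n 2 with h2 | h2
  · have hn1 : n = 1 := by omega
    subst hn1
    rw [if_neg one_ne_zero, if_pos rfl, hInt, if_neg (by omega)]
  · rw [if_neg (by omega), if_neg (by omega)]

lemma perp_eN_prod_hInt : ∀ (m : ℕ) (n : ℕ) (c : Fin m → ℤ), m < n →
    perp (eN n) (∏ i, hInt (c i)) = 0 := by
  intro m
  induction m with
  | zero =>
    intro n c h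
    rw [show (∏ i : Fin 0, hInt (c i)) = 1 by simp]
    exact perp_eN_one (by omega)
  | succ t iht =>
    intro n c h
    rw [Fin.prod_univ_succ, perp_eN_mul]
    refine Finset.sum_eq_zero fun j hj => ?_
    rw [Finset.mem_range] at hj
    match j with
    | 0 =>
      rw [perp_eN_hInt 0, if_pos rfl]
      rw [iht (n - 0) (fun i => c i.succ) (by omega), mul_zero]
    | 1 =>
      rw [perp_eN_hInt 1, if_neg one_ne_zero, if_pos rfl]
      rw [iht (n - 1) (fun i => c i.succ) (by omega), mul_zero]
    | (s+2) =>
      rw [perp_eN_hInt (s+2), if_neg (by omega), if_neg (by omega), zero_mul]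


/-! ### Weighted homogeneity -/

def WH (f : SymF) (N : ℕ) : Prop := ∀ d, coeff d f ≠ 0 → wt d = N

lemma WH_zero (N : ℕ) : WH (0 : SymF) N := by
  intro d hd
  simp at hd

lemma wt_zero : wt 0 = 0 := by simp [wt]

lemma wt_add (a b : ℕ →₀ ℕ) : wt (a + b) = wt a + wt b := by
  unfold wt
  exact Finsupp.sum_add_index' (fun n => by ring) (fun n m1 m2 => by ring)

lemma wt_single (n m : ℕ) : wt (Finsupp.single n m) = (n + 1) * m := by
  unfold wt
  exact Finsupp.sum_single_index (by ring)

lemma WH_C (c : F) : WH (C c) 0 := by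
  intro d hd
  have hd0 : d = 0 := by
    by_contra hne
    rw [coeff_C, if_neg (Ne.symm hne)] at hd
    exact hd rfl
  rw [hd0, wt_zero]

lemma WH_add {f g : SymF} {N : ℕ} (hf : WH f N) (hg : WH g N) : WH (f + g) N := by
  intro d hd
  rw [coeff_add] at hd
  by_cases h1 : coeff d f ≠ 0
  · exact hf d h1
  · push_neg at h1
    rw [h1, zero_add] at hd
    exact hg d hd

lemma WH_smul {f : SymF} {N : ℕ} (c : F) (hf : WH f N) : WH (c • f) N := by
  intro d hd
  rw [coeff_smul] at hd
  exact hf d (by intro h0; rw [h0, smul_zero] at hd; exact hd rfl)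

lemma WH_sum {ι : Type*} (s : Finset ι) (f : ι → SymF) (N : ℕ)
    (h : ∀ i ∈ s, WH (f i) N) : WH (∑ i ∈ s, f i) N := by
  intro d hd
  rw [coeff_sum] at hd
  obtain ⟨i, hi, hne⟩ := Finset.exists_ne_zero_of_sum_ne_zero hd
  exact h i hi d hne

lemma WH_mul {f g : SymF} {M N : ℕ} (hf : WH f M) (hg : WH g N) : WH (f * g) (M + N) := by
  intro d hd
  rw [coeff_mul] at hd
  obtain ⟨p, hp, hne⟩ := Finset.exists_ne_zero_of_sum_ne_zero hd
  rw [Finset.HasAntidiagonal.mem_antidiagonal] at hp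
  have h1 : coeff p.1 f ≠ 0 := fun h0 => hne (by rw [h0, zero_mul])
  have h2 : coeff p.2 g ≠ 0 := fun h0 => hne (by rw [h0, mul_zero])
  rw [← hp, wt_add, hf p.1 h1, hg p.2 h2]

lemma WH_X (n : ℕ) : WH (X n : SymF) (n + 1) := by
  intro d hd
  rw [show (X n : SymF) = monomial (Finsupp.single n 1) 1 from rfl, coeff_monomial] at hd
  by_cases h1 : Finsupp.single n 1 = d
  · rw [← h1, wt_single, mul_one]
  · rw [if_neg h1] at hd
    exact absurd rfl hd

lemma WH_hN (n : ℕ) : WH (hN n) n := by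
  induction n using Nat.strong_induction_on with
  | _ n ih =>
  match n with
  | 0 =>
    intro d hd
    have h1 : hN 0 = C 1 := by rw [C_1]; simp only [hN]
    rw [h1] at hd
    exact WH_C 1 d hd
  | (m+1) =>
    have h1 : hN (m+1) = ((m+1:F))⁻¹ • ∑ i ∈ Finset.range (m+1), X i * hN (m - i) := by
      simp only [hN]
    rw [h1]
    apply WH_smul
    apply WH_sum
    intro i hi
    rw [Finset.mem_range] at hi
    have h2 := WH_mul (WH_X i) (ih (m - i) (by omega))
    have h3 : (i+1) + (m - i) = m+1 := by omega
    rwa [h3] at h2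

lemma WH_hInt {m : ℤ} {N : ℕ} (h : m = (N:ℤ)) : WH (hInt m) N := by
  rw [hInt, if_pos (by omega)]
  have h1 : m.toNat = N := by omega
  rw [h1]
  exact WH_hN N

lemma WH_one : WH (1 : SymF) 0 := by
  have := WH_C (1 : F)
  rwa [C_1] at this

lemma WH_prod_list : ∀ (l : List ℤ) (N : ℕ),
    (l.sum = (N:ℤ) ∨ ∃ x ∈ l, x < 0) → WH ((l.map hInt).prod) N := by
  intro l
  induction l with
  | nil =>
    intro N h
    rcases h with h | ⟨x, hx, _⟩
    · simp only [List.sum_nil] at h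
      have : N = 0 := by omega
      subst this
      simpa using WH_one
    · simp at hx
  | cons a t ih =>
    intro N h
    rw [List.map_cons, List.prod_cons]
    by_cases ha : a < 0
    · have hz : hInt a = 0 := by rw [hInt, if_neg (by omega)]
      rw [hz, zero_mul]
      exact WH_zero N
    · push_neg at ha
      by_cases ht : ∃ x ∈ t, x < 0
      · obtain ⟨x, hx, hxneg⟩ := ht
        have hz : (t.map hInt).prod = 0 := by
          apply List.prod_eq_zero
          rw [List.mem_map]
          exact ⟨x, hx, by rw [hInt, if_neg (by omega)]⟩
        rw [hz, mul_zero]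
        exact WH_zero N
      · have hsum : a + t.sum = (N:ℤ) := by
          rcases h with h | ⟨x, hx, hxneg⟩
          · simpa using h
          · rcases List.mem_cons.mp hx with rfl | hx'
            · omega
            · exact absurd ⟨x, hx', hxneg⟩ ht
        push_neg at ht
        have htn : (0:ℤ) ≤ t.sum := List.sum_nonneg ht
        have h1 := WH_hInt (show a = ((a.toNat : ℕ):ℤ) by omega)
        have h2 := ih t.sum.toNat (Or.inl (by omega))
        have h3 := WH_mul h1 h2
        have h4 : a.toNat + t.sum.toNat = N := by omega
        rwa [h4] at h3

lemma WH_intCast (z : ℤ) : WH ((z : SymF)) 0 := by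
  rw [← map_intCast (C : F →+* SymF) z]
  exact WH_C _

lemma WH_schurSeq {k : ℕ} (p : Fin k → ℤ) (N : ℕ) (h : ∑ i, p i = (N:ℤ)) :
    WH (schurSeq p) N := by
  rw [schurSeq, Matrix.det_apply']
  apply WH_sum
  intro σ _
  have h0 := WH_intCast ((Equiv.Perm.sign σ : ℤ))
  have h1 : WH (∏ i, (Matrix.of fun i j : Fin k => hInt (p i - (i:ℤ) + (j:ℤ))) (σ i) i) N := by
    have hconv : (∏ i, (Matrix.of fun i j : Fin k => hInt (p i - (i:ℤ) + (j:ℤ))) (σ i) i)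
        = ((List.ofFn (fun i : Fin k => p (σ i) - ((σ i : Fin k):ℤ) + ((i : Fin k):ℤ))).map hInt).prod := by
      rw [List.map_ofFn, List.prod_ofFn]
      rfl
    rw [hconv]
    apply WH_prod_list
    left
    rw [List.sum_ofFn]
    have e1 : ∑ i, (p (σ i) - ((σ i : Fin k):ℤ) + ((i : Fin k):ℤ))
        = (∑ i, p (σ i) - ∑ i, ((σ i : Fin k):ℤ)) + ∑ i, ((i : Fin k):ℤ) := by
      rw [Finset.sum_add_distrib, Finset.sum_sub_distrib]
    rw [e1, Equiv.sum_comp σ p, Equiv.sum_comp σ (fun i : Fin k => ((i : Fin k):ℤ)), h]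
    ring
  have h2 := WH_mul h0 h1
  rwa [zero_add] at h2

lemma mem_span_of_WH {f : SymF} {N : ℕ} (h : WH f N) :
    f ∈ Submodule.span F {x | ∃ d, wt d = N ∧ x = mono d} := by
  rw [f.as_sum]
  refine Submodule.sum_mem _ fun d hd => ?_
  have h1 : monomial d (coeff d f) = coeff d f • mono d := by
    rw [mono_def, smul_monomial, smul_eq_mul, mul_one]
  rw [h1]
  exact Submodule.smul_mem _ _ (Submodule.subset_span ⟨d, h d (mem_support_iff.mp hd), rfl⟩)

lemma og_mem_span {N : ℕ} {x : SymF}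
    (hx : x ∈ Submodule.span F {x | ∃ d, wt d = N ∧ x = mono d}) :
    og x ∈ Submodule.span F {x | ∃ d, wt d = N ∧ x = mono d} := by
  induction hx using Submodule.span_induction with
  | mem y hy =>
    obtain ⟨d, hd, rfl⟩ := hy
    rw [og_mono]
    exact Submodule.smul_mem _ _ (Submodule.subset_span ⟨d, hd, rfl⟩)
  | zero => rw [map_zero]; exact Submodule.zero_mem _
  | add y z hy hz ihy ihz => rw [map_add]; exact Submodule.add_mem _ ihy ihz
  | smul a y hy ihy => rw [map_smul]; exact Submodule.smul_mem _ _ ihy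

/-! ### `hat` on homogeneous elements -/

lemma mkOp_mono (val : (ℕ →₀ ℕ) → SymF) (d : ℕ →₀ ℕ) : mkOp val (mono d) = val d := by
  have h : (basisMonomials ℕ F) d = mono d := by rw [coe_basisMonomials]; rfl
  rw [mkOp, ← h, Module.Basis.constr_basis]

lemma hat_on_span (V : Module.End F SymF) (N : ℕ) {x : SymF}
    (hx : x ∈ Submodule.span F {x | ∃ d, wt d = N ∧ x = mono d}) :
    hat V x = ∑ n ∈ Finset.range (N+1), ∑ P : n.Partition,
      ((-1 : F))^n • (V (schur (conj (partList P))) * perp (schur (partList P)) x) := by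
  induction hx using Submodule.span_induction with
  | mem y hy =>
    obtain ⟨d, hd, rfl⟩ := hy
    unfold hat
    rw [mkOp_mono]
    simp only [hd]
  | zero =>
    rw [map_zero]
    symm
    refine Finset.sum_eq_zero fun n _ => Finset.sum_eq_zero fun P _ => ?_
    rw [map_zero, mul_zero, smul_zero]
  | add y z hy hz ihy ihz =>
    rw [map_add, ihy, ihz, ← Finset.sum_add_distrib]
    refine Finset.sum_congr rfl fun n _ => ?_
    rw [← Finset.sum_add_distrib]
    refine Finset.sum_congr rfl fun P _ => ?_
    rw [map_add, mul_add, smul_add]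
  | smul a y hy ihy =>
    rw [map_smul, ihy, Finset.smul_sum]
    refine Finset.sum_congr rfl fun n _ => ?_
    rw [Finset.smul_sum]
    refine Finset.sum_congr rfl fun P _ => ?_
    rw [map_smul, mul_smul_comm, smul_comm ((-1:F)^n) a]

/-! ### Conjugate partition facts -/

lemma conj_length (L : List ℕ) : (conj L).length = L.headI := by
  unfold conj
  simp

lemma conj_sorted (L : List ℕ) : (conj L).Pairwise (· ≥ ·) := by
  unfold conj
  rw [List.pairwise_map]
  refine (List.pairwise_lt_range (n := _)).imp ?_
  intro a b hab
  refine List.Sublist.length_le ?_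
  refine List.monotone_filter_right L ?_
  intro x hx
  simp only [decide_eq_true_eq] at hx ⊢
  omega

lemma conj_pos (L : List ℕ) : ∀ x ∈ conj L, 0 < x := by
  intro x hx
  unfold conj at hx
  rw [List.mem_map] at hx
  obtain ⟨i, hi, rfl⟩ := hx
  rw [List.mem_range] at hi
  cases L with
  | nil => simp at hi
  | cons a t =>
    have hmem : a ∈ (a :: t).filter (fun x => i + 1 ≤ x) := by
      rw [List.mem_filter]
      refine ⟨List.mem_cons_self, ?_⟩
      simp only [decide_eq_true_eq]
      simpa using hi
    exact List.length_pos_iff.mpr (List.ne_nil_of_mem hmem)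

/-! ### Vanishing lemmas -/

lemma get_zero_headI (L : List ℕ) (h : 0 < L.length) : L.get ⟨0, h⟩ = L.headI := by
  cases L with
  | nil => simp at h
  | cons a t => rfl

lemma perp_eInt_schur {c : ℤ} (M : List ℕ) (h : (M.length : ℤ) < c) :
    perp (eInt c) (schur M) = 0 := by
  have hc : 0 ≤ c := by omega
  rw [eInt, if_pos hc]
  unfold schur schurSeq
  rw [Matrix.det_apply', map_sum]
  refine Finset.sum_eq_zero fun σ _ => ?_
  have hcast : ∀ (z : ℤ) (p : SymF), ((z : SymF)) * p = ((z:ℤ):F) • p := by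
    intro z p
    rw [← map_intCast (C : F →+* SymF) z, C_mul']
  rw [hcast, map_smul]
  have hvan := perp_eN_prod_hInt M.length c.toNat
    (fun i => ((M.get (σ i) : ℕ) : ℤ) - ((σ i : Fin M.length) : ℤ) + ((i : Fin M.length) : ℤ))
    (by omega)
  simp only [Matrix.of_apply]
  rw [hvan, smul_zero]

lemma perp_schur_og {L M : List ℕ} (hgt : (M.length : ℤ) + 1 ≤ (L.headI : ℤ)) :
    perp (schur L) (og (schur M)) = 0 := by
  have hLpos : 0 < L.length := by
    cases L with
    | nil => simp at hgt; omega
    | cons a t => simp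
  have hdet : og (schur L)
      = ∑ σ : Equiv.Perm (Fin L.length), ((Equiv.Perm.sign σ : ℤ) : SymF) *
          ∏ i, eInt (((L.get (σ i) : ℕ) : ℤ) - ((σ i : Fin L.length) : ℤ) + ((i : Fin L.length) : ℤ)) := by
    unfold schur schurSeq
    rw [Matrix.det_apply', map_sum]
    refine Finset.sum_congr rfl fun σ _ => ?_
    rw [map_mul, map_prod]
    congr 1
    · exact map_intCast og _
    · refine Finset.prod_congr rfl fun i _ => ?_
      simp only [Matrix.of_apply]
      exact og_hInt _
  have KEY : perp (og (schur L)) (schur M) = 0 := by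
    rw [hdet, perp_sum_apply]
    refine Finset.sum_eq_zero fun σ _ => ?_
    set i₀ : Fin L.length := σ.symm ⟨0, hLpos⟩ with hi₀
    rw [← Finset.mul_prod_erase _ _ (Finset.mem_univ i₀), mul_left_comm, perp_mul_apply]
    have hbig : perp (eInt (((L.get (σ i₀) : ℕ) : ℤ) - ((σ i₀ : Fin L.length) : ℤ)
        + ((i₀ : Fin L.length) : ℤ))) (schur M) = 0 := by
      apply perp_eInt_schur
      have hs : σ i₀ = ⟨0, hLpos⟩ := σ.apply_symm_apply _
      rw [hs, get_zero_headI]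
      have h0 : (((⟨0, hLpos⟩ : Fin L.length) : Fin L.length) : ℤ) = 0 := rfl
      rw [h0]
      have hnn : (0:ℤ) ≤ ((i₀ : Fin L.length) : ℤ) := by positivity
      omega
    rw [hbig, map_zero]
  apply ext_Bl
  intro d
  rw [(Bl (mono d)).map_zero, Bl_mono_perp, Bl_og_right, map_mul, Bl_adj, KEY,
    (Bl (og (mono d))).map_zero]


end Aux

/-- Lemma 8: if `U` and `V` agree on all Schur functions indexed by partitions of length
`≤ k`, then so do `ω ∘ Û ∘ ω` and `ω ∘ V̂ ∘ ω`. -/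
theorem level_equal_hat (U V : Module.End F SymF) (k : ℕ)
    (h : ∀ L : List ℕ, IsPartition L → L.length ≤ k → U (schur L) = V (schur L)) :
    ∀ G : List ℕ, IsPartition G → G.length ≤ k →
      (omegaOp * hat U * omegaOp) (schur G) = (omegaOp * hat V * omegaOp) (schur G) := by
  intro G hG hGk
  have hsum : ∑ i : Fin G.length, ((G.get i : ℕ) : ℤ) = ((G.sum : ℕ) : ℤ) := by
    rw [← Nat.cast_sum]
    congr 1
    rw [← List.sum_ofFn (f := G.get), List.ofFn_get]
  have hWH : WH (schur G) G.sum := by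
    unfold schur
    exact WH_schurSeq _ _ hsum
  have hx : og (schur G) ∈ Submodule.span F {x | ∃ d, wt d = G.sum ∧ x = mono d} :=
    og_mem_span (mem_span_of_WH hWH)
  have hkey : hat U (og (schur G)) = hat V (og (schur G)) := by
    rw [hat_on_span U G.sum hx, hat_on_span V G.sum hx]
    refine Finset.sum_congr rfl fun n _ => Finset.sum_congr rfl fun P _ => ?_
    by_cases hcase : (partList P).headI ≤ k
    · rw [h (conj (partList P)) ⟨conj_sorted _, conj_pos _⟩ (by rw [conj_length]; exact hcase)]
    · have hv : perp (schur (partList P)) (og (schur G)) = 0 := by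
        apply perp_schur_og
        omega
      simp only [hv, mul_zero]
  show omegaOp (hat U (omegaOp (schur G))) = omegaOp (hat V (omegaOp (schur G)))
  simp only [omegaOp_apply]
  rw [hkey]
end
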